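/- Let c_i = 2i² + 2i(b+m) + C where C is a constant and b, m ≥ 0. Then the recursion d_r(c_i - c_r) = -d_{r+1}·2(r+1)(b+r+1) for 0 ≤ r < i, with normalization ∑_{r=0}^{i} d_r = 1, has the unique solution d_r = ((m+b+i)_i/(m)_i) · ((-i)_{i-r}(-i-b)_{i-r})/((i-r)!(1-m-2i-b)_{i-r}) for 0 ≤ r ≤ i (assuming m ≥ 2 so no denominator vanishes). -/

import Mathlib

set_option maxHeartbeats 1600000

open Finset Polynomial

lemma poch_neg_nat (n k : ℕ) :
    (ascPochhammer ℝ k).eval (-(n : ℝ)) = (-1) ^ k * (n.descFactorial k : ℝ) := by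
  rw [ascPochhammer_eval_neg_eq_descPochhammer, descPochhammer_eval_eq_descFactorial]

lemma poch_nat' (n k : ℕ) :
    (ascPochhammer ℝ k).eval ((n : ℝ)) = (n.ascFactorial k : ℝ) := by
  rw [← ascPochhammer_eval_cast, ascPochhammer_nat_eq_ascFactorial]

lemma altVan : ∀ (n N q : ℕ), n ≤ N → n ≤ q →
    ∑ k ∈ range (n + 1), (-1 : ℝ) ^ k * (n.choose k) * ((N - k).choose q) =
      ((N - n).choose (q - n) : ℝ) := by
  intro n
  induction n with
  | zero => intro N q _ _; simp
  | succ n ih =>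
    intro N q hN hq
    rw [Finset.sum_range_succ']
    have h1 : ∀ k ∈ range (n + 1), (-1 : ℝ) ^ (k+1) * ((n+1).choose (k+1)) * ((N - (k+1)).choose q)
        = -((-1 : ℝ) ^ k * (n.choose k) * (((N-1) - k).choose q))
          + (-1:ℝ)^(k+1) * (n.choose (k+1)) * ((N - (k+1)).choose q) := by
      intro k _
      have : N - (k+1) = (N - 1) - k := by omega
      rw [this, Nat.choose_succ_succ]
      push_cast
      ring
    rw [Finset.sum_congr rfl h1, Finset.sum_add_distrib, Finset.sum_neg_distrib]
    have h2 : ∑ k ∈ range (n + 1), (-1 : ℝ) ^ k * (n.choose k) * (((N-1) - k).choose q)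
        = (((N-1) - n).choose (q - n) : ℝ) := ih (N-1) q (by omega) (by omega)
    have h3 : ∑ k ∈ range (n + 1), (-1:ℝ)^(k+1) * (n.choose (k+1)) * ((N - (k+1)).choose q)
        = ∑ k ∈ range (n + 2), (-1:ℝ)^k * (n.choose k) * ((N - k).choose q)
          - (-1:ℝ)^0 * (n.choose 0) * ((N - 0).choose q) := by
      rw [Finset.sum_range_succ' (fun k => (-1:ℝ)^k * (n.choose k) * ((N - k).choose q)) (n+1)]
      ring
    have h4 : ∑ k ∈ range (n + 2), (-1:ℝ)^k * (n.choose k) * ((N - k).choose q)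
        = ∑ k ∈ range (n + 1), (-1:ℝ)^k * (n.choose k) * ((N - k).choose q) := by
      rw [Finset.sum_range_succ]
      simp [Nat.choose_eq_zero_of_lt (Nat.lt_succ_self n)]
    have h5 := ih N q (by omega) (by omega)
    rw [h2, h3, h4, h5]
    have e1 : N - n = (N - (n+1)) + 1 := by omega
    have e2 : q - n = (q - (n+1)) + 1 := by omega
    have e3 : (N-1) - n = N - (n+1) := by omega
    rw [e1, e2, e3, Nat.choose_succ_succ]
    simp only [Nat.succ_eq_add_one, Nat.choose_zero_right]
    push_cast
    ring


lemma keyG (b v i k : ℕ) (hk : k ≤ i) (A : ℝ) :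
    A * ((ascPochhammer ℝ k).eval (-(i : ℝ)) * (ascPochhammer ℝ k).eval (-(i : ℝ) - b)) /
        ((k.factorial : ℝ) * (ascPochhammer ℝ k).eval (1 - ((v+2 : ℕ) : ℝ) - 2 * i - b))
      = A / ((v + 2*i + b + 1).choose (i+b) : ℝ) *
        ((-1:ℝ)^k * (i.choose k) * (((v + 2*i + b + 1) - k).choose (v + i + 1))) := by
  set M : ℕ := v + 2*i + b + 1 with hM
  set q : ℕ := v + i + 1 with hq
  have e2 : -(i : ℝ) - b = -(((i+b : ℕ)) : ℝ) := by push_cast; ring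
  have e3 : 1 - ((v+2 : ℕ) : ℝ) - 2 * i - b = -((M : ℕ) : ℝ) := by rw [hM]; push_cast; ring
  rw [e2, e3, poch_neg_nat, poch_neg_nat, poch_neg_nat,
    Nat.descFactorial_eq_factorial_mul_choose, Nat.descFactorial_eq_factorial_mul_choose,
    Nat.descFactorial_eq_factorial_mul_choose]
  have hnat : (M.choose (i+b)) * ((i+b).choose k) = (M.choose k) * ((M-k).choose q) := by
    rw [Nat.choose_mul (by omega)]
    congr 1
    have h1 : M - k - q = i + b - k := by omega
    rw [← Nat.choose_symm (show q ≤ M - k by omega), h1]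
  have hMk : ((M.choose k : ℕ) : ℝ) ≠ 0 := by
    exact_mod_cast (Nat.choose_pos (show k ≤ M by omega)).ne'
  have hMib : ((M.choose (i+b) : ℕ) : ℝ) ≠ 0 := by
    exact_mod_cast (Nat.choose_pos (show i + b ≤ M by omega)).ne'
  have hkf : ((k.factorial : ℕ) : ℝ) ≠ 0 := by exact_mod_cast k.factorial_ne_zero
  have hneg : ((-1 : ℝ))^k ≠ 0 := by positivity
  have hnatR : ((M.choose (i+b) : ℝ)) * ((i+b).choose k : ℝ)
      = ((M.choose k : ℝ)) * (((M-k).choose q : ℝ)) := by exact_mod_cast hnat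
  field_simp
  push_cast
  linear_combination (A * (k.factorial:ℝ)^2 * (i.choose k : ℝ)) * hnatR

lemma sumD (b v i : ℕ) :
    ∑ r ∈ range (i+1),
      ((ascPochhammer ℝ i).eval (((v+2 : ℕ) : ℝ) + b + i) / (ascPochhammer ℝ i).eval ((v+2 : ℕ) : ℝ)) *
        ((ascPochhammer ℝ (i - r)).eval (-(i : ℝ)) *
          (ascPochhammer ℝ (i - r)).eval (-(i : ℝ) - b)) /
        (((i - r).factorial : ℝ) *
          (ascPochhammer ℝ (i - r)).eval (1 - ((v+2 : ℕ) : ℝ) - 2 * i - b)) = 1 := by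
  set M : ℕ := v + 2*i + b + 1 with hM
  set q : ℕ := v + i + 1 with hq
  set A : ℝ := (ascPochhammer ℝ i).eval (((v+2 : ℕ) : ℝ) + b + i) / (ascPochhammer ℝ i).eval ((v+2 : ℕ) : ℝ) with hA
  have key : ∀ k, k ≤ i →
      A * ((ascPochhammer ℝ k).eval (-(i : ℝ)) * (ascPochhammer ℝ k).eval (-(i : ℝ) - b)) /
        ((k.factorial : ℝ) * (ascPochhammer ℝ k).eval (1 - ((v+2 : ℕ) : ℝ) - 2 * i - b))
      = A / (M.choose (i+b) : ℝ) * ((-1:ℝ)^k * (i.choose k) * ((M - k).choose q)) := by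
    intro k hk
    have e2 : -(i : ℝ) - b = -(((i+b : ℕ)) : ℝ) := by push_cast; ring
    have e3 : 1 - ((v+2 : ℕ) : ℝ) - 2 * i - b = -((M : ℕ) : ℝ) := by rw [hM]; push_cast; ring
    rw [e2, e3, poch_neg_nat, poch_neg_nat, poch_neg_nat,
      Nat.descFactorial_eq_factorial_mul_choose, Nat.descFactorial_eq_factorial_mul_choose,
      Nat.descFactorial_eq_factorial_mul_choose]
    have hnat : (M.choose (i+b)) * ((i+b).choose k) = (M.choose k) * ((M-k).choose q) := by
      rw [Nat.choose_mul (by omega)]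
      congr 1
      have h1 : M - k - q = i + b - k := by omega
      rw [← Nat.choose_symm (show q ≤ M - k by omega), h1]
    have hMk : ((M.choose k : ℕ) : ℝ) ≠ 0 := by
      exact_mod_cast (Nat.choose_pos (show k ≤ M by omega)).ne'
    have hMib : ((M.choose (i+b) : ℕ) : ℝ) ≠ 0 := by
      exact_mod_cast (Nat.choose_pos (show i + b ≤ M by omega)).ne'
    have hkf : ((k.factorial : ℕ) : ℝ) ≠ 0 := by exact_mod_cast k.factorial_ne_zero
    have hneg : ((-1 : ℝ))^k ≠ 0 := by positivity
    have hnatR : ((M.choose (i+b) : ℝ)) * ((i+b).choose k : ℝ)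
        = ((M.choose k : ℝ)) * (((M-k).choose q : ℝ)) := by exact_mod_cast hnat
    field_simp
    push_cast
    linear_combination (A * (k.factorial:ℝ)^2 * (i.choose k : ℝ)) * hnatR
  have hsum : ∑ r ∈ range (i+1),
      A * ((ascPochhammer ℝ (i-r)).eval (-(i : ℝ)) * (ascPochhammer ℝ (i-r)).eval (-(i : ℝ) - b)) /
        (((i-r).factorial : ℝ) * (ascPochhammer ℝ (i-r)).eval (1 - ((v+2 : ℕ) : ℝ) - 2 * i - b))
      = A / (M.choose (i+b) : ℝ) * (((M - i).choose (q - i) : ℝ)) := by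
    rw [Finset.sum_congr rfl (fun r hr => key (i - r) (by omega))]
    have hr2 : ∑ r ∈ range (i+1), A / (M.choose (i+b) : ℝ) * ((-1:ℝ)^(i-r) * (i.choose (i-r)) * ((M - (i-r)).choose q))
        = ∑ k ∈ range (i+1), A / (M.choose (i+b) : ℝ) * ((-1:ℝ)^k * (i.choose k) * ((M - k).choose q)) := by
      rw [← Finset.sum_range_reflect (fun k => A / (M.choose (i+b) : ℝ) * ((-1:ℝ)^k * (i.choose k) * ((M - k).choose q))) (i+1)]
      simp only [Nat.add_sub_cancel]
    rw [hr2, ← Finset.mul_sum]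
    congr 1
    exact altVan i M q (by omega) (by omega)
  rw [hsum]
  rw [hA, hM, hq]
  have e1 : ((v+2 : ℕ) : ℝ) + b + i = ((v+2+b+i : ℕ) : ℝ) := by push_cast; ring
  have e2 : ((v+2 : ℕ) : ℝ) = ((v+2 : ℕ) : ℝ) := by push_cast; ring
  rw [e1, e2, poch_nat', poch_nat', Nat.ascFactorial_eq_factorial_mul_choose',
    Nat.ascFactorial_eq_factorial_mul_choose']
  have e3 : v + 2 + b + i + i - 1 = v + 2*i + b + 1 := by omega
  have e4 : v + 2 + i - 1 = v + i + 1 := by omega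
  have e5 : (v + 2*i + b + 1) - i = v + i + b + 1 := by omega
  have e6 : (v + i + 1) - i = v + 1 := by omega
  rw [e3, e4, e5, e6]
  push_cast
  rw [Nat.cast_choose ℝ (show i ≤ v + 2*i + b + 1 by omega),
      Nat.cast_choose ℝ (show i ≤ v + i + 1 by omega),
      Nat.cast_choose ℝ (show i + b ≤ v + 2*i + b + 1 by omega),
      Nat.cast_choose ℝ (show v + 1 ≤ v + i + b + 1 by omega)]
  have e7 : v + 2*i + b + 1 - i = v + i + b + 1 := by omega
  have e8 : v + i + 1 - i = v + 1 := by omega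
  have e9 : v + 2*i + b + 1 - (i + b) = v + i + 1 := by omega
  have e10 : v + i + b + 1 - (v + 1) = i + b := by omega
  rw [e7, e8, e9, e10]
  have f1 : ((v + 2*i + b + 1).factorial : ℝ) ≠ 0 := by exact_mod_cast Nat.factorial_ne_zero _
  have f2 : ((v + i + b + 1).factorial : ℝ) ≠ 0 := by exact_mod_cast Nat.factorial_ne_zero _
  have f3 : ((v + i + 1).factorial : ℝ) ≠ 0 := by exact_mod_cast Nat.factorial_ne_zero _
  have f4 : ((v + 1).factorial : ℝ) ≠ 0 := by exact_mod_cast Nat.factorial_ne_zero _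
  have f5 : ((i + b).factorial : ℝ) ≠ 0 := by exact_mod_cast Nat.factorial_ne_zero _
  have f6 : (i.factorial : ℝ) ≠ 0 := by exact_mod_cast Nat.factorial_ne_zero _
  field_simp

/-- The normalized solution of the recursion `d_r(c_i - c_r) = -2(r+1)(b+r+1) d_{r+1}` with
`c_n = 2n² + 2n(b+m) + C` and `∑_{r=0}^{i} d_r = 1` is
`d_r = ((m+b+i)_i/(m)_i) · ((-i)_{i-r}(-i-b)_{i-r})/((i-r)!(1-m-2i-b)_{i-r})`. -/
theorem recursion_unique_solution (b m : ℕ) (hm : 2 ≤ m) (C : ℝ) (c : ℕ → ℝ)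
    (hc : ∀ n : ℕ, c n = 2 * (n : ℝ) ^ 2 + 2 * (n : ℝ) * ((b : ℝ) + (m : ℝ)) + C)
    (i : ℕ) (d : ℕ → ℝ)
    (hrec : ∀ r < i, d r * (c i - c r) = -(d (r + 1)) * (2 * ((r : ℝ) + 1) * ((b : ℝ) + r + 1)))
    (hnorm : ∑ r ∈ Finset.range (i + 1), d r = 1) :
    ∀ r ≤ i, d r =
      ((ascPochhammer ℝ i).eval ((m : ℝ) + b + i) / (ascPochhammer ℝ i).eval (m : ℝ)) *
        ((ascPochhammer ℝ (i - r)).eval (-(i : ℝ)) *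
          (ascPochhammer ℝ (i - r)).eval (-(i : ℝ) - b)) /
        (((i - r).factorial : ℝ) *
          (ascPochhammer ℝ (i - r)).eval (1 - (m : ℝ) - 2 * i - b)) := by
  obtain ⟨v, rfl⟩ : ∃ v, m = v + 2 := ⟨m - 2, by omega⟩
  set D : ℕ → ℝ := fun r =>
      ((ascPochhammer ℝ i).eval (((v+2 : ℕ) : ℝ) + b + i) / (ascPochhammer ℝ i).eval ((v+2 : ℕ) : ℝ)) *
        ((ascPochhammer ℝ (i - r)).eval (-(i : ℝ)) *
          (ascPochhammer ℝ (i - r)).eval (-(i : ℝ) - b)) /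
        (((i - r).factorial : ℝ) *
          (ascPochhammer ℝ (i - r)).eval (1 - ((v+2 : ℕ) : ℝ) - 2 * i - b)) with hD
  suffices h : ∀ r ≤ i, d r = D r by
    intro r hr
    exact h r hr
  -- sum of D is 1
  have hsumD : ∑ r ∈ range (i+1), D r = 1 := by
    simp only [hD]
    exact sumD b v i
  -- D is nonzero at i
  have h1 : (0:ℝ) < (ascPochhammer ℝ i).eval (((v+2 : ℕ) : ℝ) + b + i) := by
    apply ascPochhammer_pos
    push_cast
    positivity
  have h2 : (0:ℝ) < (ascPochhammer ℝ i).eval ((v+2 : ℕ) : ℝ) := by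
    apply ascPochhammer_pos
    push_cast
    positivity
  have hDi : D i ≠ 0 := by
    rw [hD]
    simp only [Nat.sub_self, ascPochhammer_zero, Polynomial.eval_one, Nat.factorial_zero,
      Nat.cast_one, mul_one, one_mul, div_one]
    exact (div_pos h1 h2).ne'
  -- difference of c
  have hcd : ∀ r : ℕ, c i - c r = 2*((i:ℝ)-r)*((i:ℝ)+r+b+(v+2)) := by
    intro r
    rw [hc, hc]
    push_cast
    ring
  have hdelta : ∀ r, r < i → c i - c r ≠ 0 := by
    intro r hr
    rw [hcd]
    have h1 : (0:ℝ) < (i:ℝ) - r := by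
      have : (r:ℝ) < i := by exact_mod_cast hr
      linarith
    have h2 : (0:ℝ) < (i:ℝ)+r+b+(v+2) := by positivity
    positivity
  -- recursion for D
  have hDform : ∀ r, r ≤ i → D r =
      ((ascPochhammer ℝ i).eval (((v+2 : ℕ) : ℝ) + b + i) / (ascPochhammer ℝ i).eval ((v+2 : ℕ) : ℝ)) /
        ((v + 2*i + b + 1).choose (i+b) : ℝ) *
        ((-1:ℝ)^(i-r) * (i.choose (i-r)) * (((v + 2*i + b + 1) - (i-r)).choose (v + i + 1))) := by
    intro r hr
    rw [hD]
    exact keyG b v i (i-r) (by omega) _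
  have hDrec : ∀ r, r < i → D r * (c i - c r) = -(D (r + 1)) * (2 * ((r : ℝ) + 1) * ((b : ℝ) + r + 1)) := by
    intro r hr
    set j : ℕ := i - (r+1) with hjdef
    have hir : i - r = j + 1 := by omega
    have hjc : (j : ℝ) = (i:ℝ) - r - 1 := by
      have h' : ((i - (r+1) : ℕ) : ℝ) = (i:ℝ) - ((r+1 : ℕ) : ℝ) := Nat.cast_sub (by omega)
      rw [hjdef, h']
      push_cast
      ring
    rw [hcd, hDform r (by omega), hDform (r+1) (by omega)]
    rw [show i - (r+1) = j from rfl, hir]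
    rw [show (v + 2*i + b + 1) - (j+1) = v+i+b+r+1 by omega,
        show (v + 2*i + b + 1) - j = v+i+b+r+2 by omega]
    have n1 : (i.choose (j+1)) * (j+1) = (i.choose j) * (r+1) := by
      have h' := Nat.choose_succ_right_eq i j
      rwa [show i - j = r + 1 by omega] at h'
    have n2 : ((v+i+b+r+1).choose (v+i+1)) * (v+i+b+r+2)
        = ((v+i+b+r+2).choose (v+i+1)) * (b+r+1) := by
      have h' := Nat.choose_mul_succ_eq (v+i+b+r+1) (v+i+1)
      rwa [show v+i+b+r+1+1 = v+i+b+r+2 by omega, show v+i+b+r+2-(v+i+1) = b+r+1 by omega] at h'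
    have n1R : ((i.choose (j+1) : ℕ) : ℝ) * ((j:ℝ)+1) = ((i.choose j : ℕ) : ℝ) * ((r:ℝ)+1) := by
      exact_mod_cast n1
    have n2R : (((v+i+b+r+1).choose (v+i+1) : ℕ) : ℝ) * ((v:ℝ)+i+b+r+2)
        = (((v+i+b+r+2).choose (v+i+1) : ℕ) : ℝ) * ((b:ℝ)+r+1) := by
      exact_mod_cast n2
    have n3R : (((i.choose (j+1) : ℕ) : ℝ) * ((j:ℝ)+1)) * ((((v+i+b+r+1).choose (v+i+1) : ℕ) : ℝ) * ((v:ℝ)+i+b+r+2))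
        = (((i.choose j : ℕ) : ℝ) * ((r:ℝ)+1)) * ((((v+i+b+r+2).choose (v+i+1) : ℕ) : ℝ) * ((b:ℝ)+r+1)) := by
      rw [n1R, n2R]
    have hsub : (i:ℝ) - r = (j:ℝ) + 1 := by rw [hjc]; ring
    rw [hsub]
    push_cast
    set A' : ℝ := (ascPochhammer ℝ i).eval (((v:ℝ)+2) + b + i) / (ascPochhammer ℝ i).eval ((v:ℝ)+2) /
        (((v + 2*i + b + 1).choose (i+b) : ℕ) : ℝ) with hA'
    linear_combination (-2 * A' * (-1:ℝ)^j) * n3R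
  -- uniqueness
  set t : ℝ := d i / D i with ht
  have claim : ∀ j, j ≤ i → d (i - j) = t * D (i - j) := by
    intro j
    induction j with
    | zero =>
      intro _
      simp only [Nat.sub_zero, ht]
      exact (div_mul_cancel₀ (d i) hDi).symm
    | succ j ih =>
      intro hji
      have hij : i - (j+1) < i := by omega
      have hsucc : i - (j+1) + 1 = i - j := by omega
      have h1 := hrec (i - (j+1)) hij
      have h2 := hDrec (i - (j+1)) hij
      have h3 : d (i - (j+1) + 1) = t * D (i - (j+1) + 1) := by
        rw [hsucc]; exact ih (by omega)
      have hΔ := hdelta (i - (j+1)) hij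
      have heq : d (i - (j+1)) * (c i - c (i - (j+1))) = (t * D (i - (j+1))) * (c i - c (i - (j+1))) := by
        linear_combination h1 - t * h2 -
          (2 * ((i - (j + 1) : ℕ) + 1 : ℝ) * ((b:ℝ) + (i - (j + 1) : ℕ) + 1)) * h3
      exact mul_right_cancel₀ hΔ heq
  have ht1 : t = 1 := by
    have : ∑ r ∈ range (i+1), d r = t * ∑ r ∈ range (i+1), D r := by
      rw [Finset.mul_sum]
      apply Finset.sum_congr rfl
      intro r hr
      have hr' : r ≤ i := by
        have := Finset.mem_range.mp hr
        omega
      have : d (i - (i - r)) = t * D (i - (i - r)) := claim (i - r) (by omega)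
      rwa [show i - (i - r) = r by omega] at this
    rw [hnorm, hsumD, mul_one] at this
    exact this.symm
  intro r hr
  have := claim (i - r) (by omega)
  rw [show i - (i - r) = r by omega, ht1, one_mul] at this
  exact this
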